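/- Let n, m ≥ 2 and 1 ≤ k < m, and let T be any deterministic decision tree computing h_{k,n,m}. Then for every function ℓ : [m] → [n], when the computation of T on the input x^ℓ reaches its output leaf (which is labeled 0, since x^ℓ is a 0-input), either at least m − k + 1 of the cells queried along the way have value 0, or the total number of cells queried exceeds n(m−k) − 2m. -/

import Mathlib

open Classical
open scoped ENNReal

set_option maxHeartbeats 1000000

/-! ### Deterministic decision trees -/

inductive DTree (ι σ : Type) : Type
  | leaf (b : Bool) : DTree ι σ
  | node (v : ι) (child : σ → DTree ι σ) : DTree ι σ

namespace DTree

variable {ι σ : Type}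

/-- The output of the decision tree on input `x`. -/
def eval (x : ι → σ) : DTree ι σ → Bool
  | leaf b => b
  | node v child => (child (x v)).eval x

/-- The list of variables queried by the decision tree on input `x`,
in the order they are queried. -/
def queryList (x : ι → σ) : DTree ι σ → List ι
  | leaf _ => []
  | node v child => v :: (child (x v)).queryList x

/-- The cost of the decision tree on input `x`: the number of internal nodes visited. -/
def cost (T : DTree ι σ) (x : ι → σ) : ℕ := (T.queryList x).length

/-- `T` computes `f` if it outputs `f x` on every input `x`. -/
def Computes (T : DTree ι σ) (f : (ι → σ) → Bool) : Prop := ∀ x, T.eval x = f x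

end DTree

/-- Deterministic query complexity. -/
noncomputable def detComplexity {ι σ : Type} (f : (ι → σ) → Bool) : ℕ :=
  sInf {d : ℕ | ∃ T : DTree ι σ, T.Computes f ∧ ∀ x, T.cost x ≤ d}

/-- Expected cost of a randomized decision tree (a distribution over deterministic
decision trees) on input `x`. -/
noncomputable def expCost {ι σ : Type} (μ : PMF (DTree ι σ)) (x : ι → σ) : ℝ≥0∞ :=
  ∑' T : DTree ι σ, μ T * (T.cost x : ℝ≥0∞)

/-- Zero-error (Las Vegas) randomized query complexity. -/
noncomputable def R0query {ι σ : Type} (f : (ι → σ) → Bool) : ℝ≥0∞ :=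
  ⨅ μ ∈ {μ : PMF (DTree ι σ) | ∀ T ∈ μ.support, T.Computes f},
    ⨆ x : ι → σ, expCost μ x

/-- One-sided error randomized query complexity. -/
noncomputable def R1query {ι σ : Type} (f : (ι → σ) → Bool) : ℝ≥0∞ :=
  ⨅ μ ∈ {μ : PMF (DTree ι σ) |
      (∀ x, f x = false → ∀ T ∈ μ.support, T.eval x = false) ∧
      (∀ x, f x = true → 1 / 2 ≤ ∑' T : DTree ι σ, if T.eval x = true then μ T else 0)},
    ⨆ x : ι → σ, expCost μ x

/-- Bounded-error (Monte Carlo) randomized query complexity. -/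
noncomputable def Rquery {ι σ : Type} (f : (ι → σ) → Bool) : ℝ≥0∞ :=
  ⨅ μ ∈ {μ : PMF (DTree ι σ) |
      ∀ x, 9 / 10 ≤ ∑' T : DTree ι σ, if T.eval x = f x then μ T else 0},
    ⨆ x : ι → σ, expCost μ x
/-! ### Quantum query algorithms -/

/-- The standard quantum query oracle `O_x |j,p⟩|w⟩ = |j, p + x_j mod S⟩|w⟩`,
as a matrix. -/
noncomputable def qOracle {V ω : Type} [DecidableEq V] [DecidableEq ω] {S : ℕ}
    (x : V → Fin S) : Matrix (V × Fin S × ω) (V × Fin S × ω) ℂ :=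
  fun r c => if r = (c.1, c.2.1 + x c.1, c.2.2) then 1 else 0

/-- A quantum query algorithm on inputs `x : V → Fin S`, making `queries` queries, with
workspace `Fin (W+1)`, alternating the unitaries `U 0, …, U queries` with the oracle,
and measuring with the projector `P` at the end. -/
structure QAlg (V : Type) [Fintype V] [DecidableEq V] (S : ℕ) [NeZero S] where
  queries : ℕ
  W : ℕ
  init : V
  U : ℕ → Matrix (V × Fin S × Fin (W + 1)) (V × Fin S × Fin (W + 1)) ℂ
  hU : ∀ t, (U t).conjTranspose * U t = 1 ∧ U t * (U t).conjTranspose = 1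
  P : Matrix (V × Fin S × Fin (W + 1)) (V × Fin S × Fin (W + 1)) ℂ
  hP : P.conjTranspose = P ∧ P * P = P

namespace QAlg

variable {V : Type} [Fintype V] [DecidableEq V] {S : ℕ} [NeZero S]

/-- The state of the quantum algorithm after `t` steps on input `x`. -/
noncomputable def state (A : QAlg V S) (x : V → Fin S) :
    ℕ → (V × Fin S × Fin (A.W + 1) → ℂ)
  | 0 => (A.U 0).mulVec fun r => if r = (A.init, 0, 0) then 1 else 0
  | t + 1 => (A.U (t + 1)).mulVec ((qOracle x).mulVec (A.state x t))

/-- The probability that the algorithm accepts input `x`: `‖P |Ψ_x⟩‖²`. -/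
noncomputable def acceptProb (A : QAlg V S) (x : V → Fin S) : ℝ :=
  ∑ r : V × Fin S × Fin (A.W + 1), Complex.normSq (A.P.mulVec (A.state x A.queries) r)

end QAlg

/-- Bounded-error quantum query complexity (for functions over a finite input
alphabet `σ`, identified with `Fin (card σ)` via a fixed bijection). -/
noncomputable def Qquery {V σ : Type} [Fintype V] [DecidableEq V] [Fintype σ] [Nonempty σ]
    (f : (V → σ) → Bool) : ℕ :=
  letI : NeZero (Fintype.card σ) := ⟨Fintype.card_ne_zero⟩
  sInf {t : ℕ | ∃ A : QAlg V (Fintype.card σ), A.queries = t ∧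
    ∀ x : V → σ,
      (f x = true → 9 / 10 ≤ A.acceptProb fun j => Fintype.equivFin σ (x j)) ∧
      (f x = false → A.acceptProb (fun j => Fintype.equivFin σ (x j)) ≤ 1 / 10)}

/-- Exact quantum query complexity. -/
noncomputable def QEquery {V σ : Type} [Fintype V] [DecidableEq V] [Fintype σ] [Nonempty σ]
    (f : (V → σ) → Bool) : ℕ :=
  letI : NeZero (Fintype.card σ) := ⟨Fintype.card_ne_zero⟩
  sInf {t : ℕ | ∃ A : QAlg V (Fintype.card σ), A.queries = t ∧
    ∀ x : V → σ,
      (f x = true → A.acceptProb (fun j => Fintype.equivFin σ (x j)) = 1) ∧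
      (f x = false → A.acceptProb (fun j => Fintype.equivFin σ (x j)) = 0)}

/-- Approximate degree of a boolean function. -/
noncomputable def adeg {ι : Type} (F : (ι → Bool) → Bool) : ℕ :=
  sInf {d : ℕ | ∃ p : MvPolynomial ι ℝ, p.totalDegree ≤ d ∧
    ∀ y : ι → Bool, |MvPolynomial.eval (fun i => if y i then (1 : ℝ) else 0) p -
      (if F y then 1 else 0)| ≤ 1 / 10}
/-! ### The pointer functions of Göös–Pitassi–Watson type -/

/-- A symbol of the input alphabet: a boolean value, a left pointer, a right pointer,
and a back/internal pointer (to a cell or a column, depending on `β`). -/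
structure PSym (n m : ℕ) (β : Type) where
  val : Bool
  lp : Option (Fin n × Fin m)
  rp : Option (Fin n × Fin m)
  bp : Option β
deriving DecidableEq

/-- The all-ones symbol `(1,⊥,⊥,⊥)`. -/
def PSym.one (n m : ℕ) (β : Type) : PSym n m β := ⟨true, none, none, none⟩

/-- The symbol `(0,⊥,⊥,⊥)`. -/
def PSym.zero (n m : ℕ) (β : Type) : PSym n m β := ⟨false, none, none, none⟩

def PSym.equivProd (n m : ℕ) (β : Type) :
    PSym n m β ≃ Bool × Option (Fin n × Fin m) × Option (Fin n × Fin m) × Option β where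
  toFun v := (v.val, v.lp, v.rp, v.bp)
  invFun p := ⟨p.1, p.2.1, p.2.2.1, p.2.2.2⟩
  left_inv _ := rfl
  right_inv _ := rfl

instance {n m : ℕ} {β : Type} [Fintype β] : Fintype (PSym n m β) :=
  Fintype.ofEquiv _ (PSym.equivProd n m β).symm

instance {n m : ℕ} {β : Type} : Nonempty (PSym n m β) := ⟨PSym.one n m β⟩

/-- The sequence of k bits of `j`, most significant first:  the root-to-leaf path
(`false` = left, `true` = right) of the `j`-th leaf in the complete binary tree of depth `k`. -/
def bitsPath (k j : ℕ) : List Bool :=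
  ((List.range k).reverse).map fun i => j.testBit i

/-- The root-to-leaf path of the leaf labeled `j` (0-indexed) in the balanced binary tree
with `m` leaves: the complete binary tree if `m` is a power of 2, and otherwise the complete
binary tree on `2 ^ ⌊log₂ m⌋` leaves with a pair of children added to each of the
`m - 2 ^ ⌊log₂ m⌋` leftmost leaves. -/
def treePath (m j : ℕ) : List Bool :=
  if m - 2 ^ Nat.log 2 m = 0 then bitsPath (Nat.log 2 m) j
  else if j < 2 * (m - 2 ^ Nat.log 2 m) then
    bitsPath (Nat.log 2 m) (j / 2) ++ [j % 2 == 1]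
  else bitsPath (Nat.log 2 m) (j - (m - 2 ^ Nat.log 2 m))

/-- Starting at cell `a` and following the left/right pointers of `x` as prescribed by the
list `p` of moves (`false` = left pointer, `true` = right pointer); returns `none` if a
null pointer is encountered. -/
def followPath {n m : ℕ} {β : Type} (x : Fin n × Fin m → PSym n m β)
    (a : Fin n × Fin m) (p : List Bool) : Option (Fin n × Fin m) :=
  p.foldl (fun acc b => acc.bind fun c => if b then (x c).rp else (x c).lp) (some a)

/-- The conditions for `x` to be a 1-input of `f_{n,m}`, with marked column `b` and special
element `a`: (1) `b` is the unique all-1 column; (2) `a` is the unique cell of column `b`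
with `x_a ≠ (1,⊥,⊥,⊥)`; (3) for every column `j ≠ b` the tree path from `a` to the leaf
labeled `j` exists, and ends at a cell `ℓ_j` of column `j` holding a 0; (4) the back pointer
of each `ℓ_j` points to the column `b`. -/
def fCond (n m : ℕ) (x : Fin n × Fin m → PSym n m (Fin m))
    (b : Fin m) (a : Fin n × Fin m) : Prop :=
  (∀ j : Fin m, (∀ i : Fin n, (x (i, j)).val = true) ↔ j = b) ∧
  a.2 = b ∧
  (∀ i : Fin n, x (i, b) ≠ PSym.one n m (Fin m) ↔ (i, b) = a) ∧
  ∀ j : Fin m, j ≠ b →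
    ∃ ℓ : Fin n × Fin m, followPath x a (treePath m j.1) = some ℓ ∧
      ℓ.2 = j ∧ (x ℓ).val = false ∧ (x ℓ).bp = some b

/-- The pointer function `f_{n,m}`, with back pointers to the marked column. -/
noncomputable def fFun (n m : ℕ) (x : Fin n × Fin m → PSym n m (Fin m)) : Bool :=
  if ∃ b a, fCond n m x b a then true else false

/-- The conditions for `x` to be a 1-input of `g_{n,m}`, with marked column `b` and special
element `a`: (1)–(3) as for `f_{n,m}`, and (4′) the set of columns `j ≠ b` whose highlighted
zero `ℓ_j` has back pointer to `a` has size exactly `m/2`. -/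
def gCond (n m : ℕ) (x : Fin n × Fin m → PSym n m (Fin n × Fin m))
    (b : Fin m) (a : Fin n × Fin m) : Prop :=
  (∀ j : Fin m, (∀ i : Fin n, (x (i, j)).val = true) ↔ j = b) ∧
  a.2 = b ∧
  (∀ i : Fin n, x (i, b) ≠ PSym.one n m (Fin n × Fin m) ↔ (i, b) = a) ∧
  (∀ j : Fin m, j ≠ b →
    ∃ ℓ : Fin n × Fin m, followPath x a (treePath m j.1) = some ℓ ∧
      ℓ.2 = j ∧ (x ℓ).val = false) ∧
  {j : Fin m | j ≠ b ∧ ∃ ℓ : Fin n × Fin m,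
      followPath x a (treePath m j.1) = some ℓ ∧ (x ℓ).bp = some a}.ncard = m / 2

/-- The pointer function `g_{n,m}`, where exactly `m/2` of the highlighted zeroes point
back to the special element. -/
noncomputable def gFun (n m : ℕ) (x : Fin n × Fin m → PSym n m (Fin n × Fin m)) : Bool :=
  if ∃ b a, gCond n m x b a then true else false

/-- Column `j` is good in `x` (for `g_{n,m}`): `x` is a 1-input with marked column `b ≠ j`
and special element `a`, and the highlighted zero of column `j` points back to `a`. -/
def goodColumn (n m : ℕ) (x : Fin n × Fin m → PSym n m (Fin n × Fin m)) (j : Fin m) : Prop :=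
  ∃ b a, gCond n m x b a ∧ j ≠ b ∧
    ∃ ℓ : Fin n × Fin m, followPath x a (treePath m j.1) = some ℓ ∧ (x ℓ).bp = some a

/-- The conditions for `x` to be a 1-input of `h_{k,n,m}`, with marked columns `b 0,…,b (k-1)`
and special elements `a 0,…,a (k-1)`: (1) the `b s` are exactly the all-1 columns; (2) `a s` is
the unique cell of column `b s` with `x_{a s} ≠ (1,⊥,⊥,⊥)`; (3) the internal pointers of the
`a s` form a cycle and all the `a s` have equal left pointers and equal right pointers;
(4) for every non-marked column `j` the tree path from any `a s` to the leaf labeled `j`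
exists and ends at a cell `ℓ_j` of column `j` holding a 0. -/
def hCond (k n m : ℕ) (x : Fin n × Fin m → PSym n m (Fin n × Fin m))
    (b : Fin k → Fin m) (a : Fin k → Fin n × Fin m) : Prop :=
  Function.Injective b ∧
  (∀ j : Fin m, (∀ i : Fin n, (x (i, j)).val = true) ↔ ∃ s, b s = j) ∧
  (∀ s, (a s).2 = b s) ∧
  (∀ s, ∀ i : Fin n, x (i, b s) ≠ PSym.one n m (Fin n × Fin m) ↔ (i, b s) = a s) ∧
  (∀ s : Fin k, (x (a s)).bp = some (a ⟨(s.1 + 1) % k, Nat.mod_lt _ s.pos⟩)) ∧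
  (∀ s t : Fin k, (x (a s)).lp = (x (a t)).lp ∧ (x (a s)).rp = (x (a t)).rp) ∧
  ∀ j : Fin m, (∀ s, b s ≠ j) → ∀ s : Fin k,
    ∃ ℓ : Fin n × Fin m, followPath x (a s) (treePath m j.1) = some ℓ ∧
      ℓ.2 = j ∧ (x ℓ).val = false

/-- The pointer function `h_{k,n,m}` with `k` marked columns and no back pointers. -/
noncomputable def hFun (k n m : ℕ) (x : Fin n × Fin m → PSym n m (Fin n × Fin m)) : Bool :=
  if ∃ b a, hCond k n m x b a then true else false

/-- The hard input `x^ℓ`: cell `(i,j)` holds `(0,⊥,⊥,⊥)` if `i = ℓ j` and `(1,⊥,⊥,⊥)`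
otherwise. -/
def xhard (n m : ℕ) (β : Type) (ℓ : Fin m → Fin n) : Fin n × Fin m → PSym n m β :=
  fun c => if c.1 = ℓ c.2 then PSym.zero n m β else PSym.one n m β

/-- The set of (distinct) cells queried among the first `t` queries of `T` on input `x`. -/
def queriedUpTo {ι σ : Type} [DecidableEq ι] (T : DTree ι σ) (x : ι → σ) (t : ℕ) :
    Finset ι :=
  ((T.queryList x).take t).toFinset
/-! ### The progress measure for the hard distribution `x^ℓ` -/

/-- Column `j` is compromised (for the input `x^ℓ`), given the set `Q` of queried cells:
the zero cell `(ℓ j, j)` has been queried, or more than `n/2` cells of column `j` have been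
queried. -/
def compromisedCol (n m : ℕ) (ℓ : Fin m → Fin n) (Q : Finset (Fin n × Fin m))
    (j : Fin m) : Prop :=
  (ℓ j, j) ∈ Q ∨ n < 2 * (Q.filter fun c => c.2 = j).card

/-- The progress measure `I_t = A_t + (2/n)·B_t` of the decision tree `T` on the input `x^ℓ`
after `t` queries, where `A_t` is the number of compromised columns and `B_t` is the number
of queried cells lying outside compromised columns. -/
noncomputable def Imeasure (n m : ℕ)
    (T : DTree (Fin n × Fin m) (PSym n m (Fin n × Fin m))) (ℓ : Fin m → Fin n) (t : ℕ) : ℝ :=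
  ({j : Fin m |
      compromisedCol n m ℓ (queriedUpTo T (xhard n m (Fin n × Fin m) ℓ) t) j}.ncard : ℝ) +
    (2 / n) * ({c : Fin n × Fin m | c ∈ queriedUpTo T (xhard n m (Fin n × Fin m) ℓ) t ∧
      ¬ compromisedCol n m ℓ (queriedUpTo T (xhard n m (Fin n × Fin m) ℓ) t) c.2}.ncard : ℝ)
/-! ### The balanced binary tree, via root-to-node paths -/

/-- The node set of the balanced binary tree with `m` leaves: each node is identified with
the left/right path from the root to it, so the nodes are exactly the prefixes of the
root-to-leaf paths. -/
def treeNodes (m : ℕ) : Finset (List Bool) :=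
  (Finset.range m).biUnion fun j => (treePath m j).inits.toFinset

/-- The leaves of the balanced binary tree with `m` leaves. -/
def leafNodes (m : ℕ) : Finset (List Bool) :=
  (Finset.range m).image fun j => treePath m j

/-- The internal nodes of the balanced binary tree with `m` leaves. -/
def internalNodes (m : ℕ) : Finset (List Bool) :=
  treeNodes m \ leafNodes m

/-- The subtree rooted at a node `u`: all nodes of which `u` is a prefix. -/
def subtreeOf (m : ℕ) (u : List Bool) : Finset (List Bool) :=
  (treeNodes m).filter fun w => u <+: w

/-! ### The hard distribution for `h_{1,n,m}` -/

/-- A parameter quadruple `(v, π, ℓᴸ, ℓᴺ)` for the hard distribution: a bit `v`, a map `π`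
from internal tree nodes to columns, and row maps `ℓᴸ, ℓᴺ` for leaves resp. internal nodes. -/
abbrev HardQ (n m : ℕ) : Type :=
  Bool × ({u : List Bool // u ∈ internalNodes m} → Fin m) × (Fin m → Fin n) × (Fin m → Fin n)

/-- The valid parameter quadruples: `π` injective and `ℓᴸ j ≠ ℓᴺ j` for all `j`. -/
noncomputable def hardSet (n m : ℕ) : Finset (HardQ n m) :=
  Finset.univ.filter fun q => Function.Injective q.2.1 ∧ ∀ j, q.2.2.1 j ≠ q.2.2.2 j

/-- The column of the root of the tree (`none` if the tree has no internal node). -/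
noncomputable def rootCol (n m : ℕ) (q : HardQ n m) : Option (Fin m) :=
  if h : ([] : List Bool) ∈ internalNodes m then some (q.2.1 ⟨[], h⟩) else none

/-- The cell where a child node `w` of an internal node is placed: internal nodes go to
cell `(ℓᴺ (π w), π w)`, the leaf labeled `j` goes to cell `(ℓᴸ j, j)`, and the removed leaf
(the one labeled by the root's column) yields a null pointer. -/
noncomputable def childCell (n m : ℕ) (q : HardQ n m) (w : List Bool) :
    Option (Fin n × Fin m) :=
  if h : w ∈ internalNodes m then some (q.2.2.2 (q.2.1 ⟨w, h⟩), q.2.1 ⟨w, h⟩)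
  else if h2 : ∃ j : Fin m, w = treePath m j.1 ∧ some j ≠ rootCol n m q then
    some (q.2.2.1 (Classical.choose h2), Classical.choose h2)
  else none

/-- The input of the hard distribution determined by the parameter quadruple `q`:
the internal node `u` of the tree is placed at cell `(ℓᴺ (π u), π u)` with left and right
pointers to the cells of its children, value `v` and a self-loop internal pointer if `u` is
the root, and value 0 otherwise; for `j ≠ π(root)`, the leaf labeled `j` is placed at cell
`(ℓᴸ j, j)` with value 0 and null pointers; all the remaining cells hold `(1,⊥,⊥,⊥)`. -/
noncomputable def hardInput (n m : ℕ) (q : HardQ n m) :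
    Fin n × Fin m → PSym n m (Fin n × Fin m) :=
  fun c =>
    if h : ∃ u : {u : List Bool // u ∈ internalNodes m}, q.2.1 u = c.2 ∧ q.2.2.2 c.2 = c.1 then
      { val := if (Classical.choose h).1 = [] then q.1 else false
        lp := childCell n m q ((Classical.choose h).1 ++ [false])
        rp := childCell n m q ((Classical.choose h).1 ++ [true])
        bp := if (Classical.choose h).1 = [] then some c else none }
    else if some c.2 ≠ rootCol n m q ∧ c.1 = q.2.2.1 c.2 then PSym.zero n m (Fin n × Fin m)
    else PSym.one n m (Fin n × Fin m)

/-- Column `j` directly satisfies (i) or (ii): one of the cells `(ℓᴸ j, j)`, `(ℓᴺ j, j)` has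
been queried, or more than half of the cells of column `j` have been queried. -/
def colBad (n m : ℕ) (q : HardQ n m) (Q : Finset (Fin n × Fin m)) (j : Fin m) : Prop :=
  (q.2.2.1 j, j) ∈ Q ∨ (q.2.2.2 j, j) ∈ Q ∨ n < 2 * (Q.filter fun c => c.2 = j).card

/-- Column `j` is compromised: it satisfies (i) or (ii), or some ancestor `u` of `π⁻¹(j)`
in the tree is such that column `π u` satisfies (i) or (ii). -/
def compromisedCol19 (n m : ℕ) (q : HardQ n m) (Q : Finset (Fin n × Fin m))
    (j : Fin m) : Prop :=
  colBad n m q Q j ∨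
  ∃ w u : {u : List Bool // u ∈ internalNodes m}, q.2.1 w = j ∧
    u.1 <+: w.1 ∧ u.1 ≠ w.1 ∧ colBad n m q Q (q.2.1 u)

/-- The progress measure `I_t = min{A_t + (4·C0·log₂ m / n)·B_t, m/2}` of the decision tree
`D` on the hard-distribution input given by `q` after `t` queries, where `A_t` is the number
of compromised columns and `B_t` the number of queried cells outside compromised columns. -/
noncomputable def Imeasure19 (n m : ℕ) (C0 : ℝ)
    (D : DTree (Fin n × Fin m) (PSym n m (Fin n × Fin m))) (q : HardQ n m) (t : ℕ) : ℝ :=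
  min
    (({j : Fin m | compromisedCol19 n m q (queriedUpTo D (hardInput n m q) t) j}.ncard : ℝ) +
      (4 * C0 * Real.logb 2 m / n) *
        ({c : Fin n × Fin m | c ∈ queriedUpTo D (hardInput n m q) t ∧
          ¬ compromisedCol19 n m q (queriedUpTo D (hardInput n m q) t) c.2}.ncard : ℝ))
    (m / 2)
/-! ### Auxiliary material for Statement 13 -/

namespace S13

lemma eval_agree {ι σ : Type} (x y : ι → σ) :
    ∀ T : DTree ι σ, (∀ v ∈ T.queryList x, y v = x v) → T.eval y = T.eval x := by
  intro T
  induction T with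
  | leaf b => intro _; rfl
  | node v child ih =>
    intro h
    have hv : y v = x v := h v (by simp [DTree.queryList])
    simp only [DTree.eval, hv]
    exact ih _ fun u hu => h u (by simp only [DTree.queryList, List.mem_cons]; right; exact hu)

lemma length_bitsPath (k j : ℕ) : (bitsPath k j).length = k := by simp [bitsPath]

lemma bitsPath_inj {k j j' : ℕ} (hj : j < 2 ^ k) (hj' : j' < 2 ^ k)
    (h : bitsPath k j = bitsPath k j') : j = j' := by
  apply Nat.eq_of_testBit_eq
  intro i
  by_cases hik : i < k
  · exact List.map_inj_left.mp h i (by simp only [List.mem_reverse, List.mem_range]; exact hik)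
  · rw [Nat.testBit_eq_false_of_lt, Nat.testBit_eq_false_of_lt]
    · exact lt_of_lt_of_le hj' (Nat.pow_le_pow_right (by norm_num) (le_of_not_gt hik))
    · exact lt_of_lt_of_le hj (Nat.pow_le_pow_right (by norm_num) (le_of_not_gt hik))

lemma treePath_prefix_free {m j j' : ℕ} (hm : 2 ≤ m) (hj : j < m) (hj' : j' < m)
    (h : treePath m j <+: treePath m j') : j = j' := by
  have h2L : 2 ^ Nat.log 2 m ≤ m := Nat.pow_log_le_self 2 (by omega)
  have hup : m < 2 * 2 ^ Nat.log 2 m := by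
    have := Nat.lt_pow_succ_log_self (by norm_num : 1 < 2) m
    rw [pow_succ] at this; omega
  unfold treePath at h
  split_ifs at h with h1 h2 h3 h4 h5
  · -- complete tree case
    have heq := h.eq_of_length (by rw [length_bitsPath, length_bitsPath])
    exact bitsPath_inj (by omega) (by omega) heq
  · -- both long
    have heq := h.eq_of_length
      (by simp only [List.length_append, length_bitsPath, List.length_singleton])
    obtain ⟨heq1, heq2⟩ := List.append_inj heq (by rw [length_bitsPath, length_bitsPath])
    have hd : j / 2 = j' / 2 := bitsPath_inj (by omega) (by omega) heq1
    have hbit : (j % 2 == 1) = (j' % 2 == 1) := by simpa using heq2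
    have : j % 2 = j' % 2 := by
      rcases Nat.mod_two_eq_zero_or_one j with hc | hc <;>
        rcases Nat.mod_two_eq_zero_or_one j' with hc' | hc' <;>
          simp [hc, hc'] at hbit ⊢ <;> omega
    omega
  · -- long prefix of short : impossible
    have := h.length_le
    simp only [List.length_append, length_bitsPath, List.length_singleton] at this
    omega
  · -- short prefix of long : impossible
    have heq : bitsPath (Nat.log 2 m) (j - (m - 2 ^ Nat.log 2 m))
        = bitsPath (Nat.log 2 m) (j' / 2) := by
      have ht := List.prefix_iff_eq_take.mp h
      rw [length_bitsPath] at ht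
      rw [ht, List.take_left' (length_bitsPath _ _)]
    have := bitsPath_inj (by omega) (by omega) heq
    omega
  · -- both short
    have heq := h.eq_of_length (by rw [length_bitsPath, length_bitsPath])
    have := bitsPath_inj (by omega) (by omega) heq
    omega

lemma treePath_ne_nil {m : ℕ} (hm : 2 ≤ m) (j : ℕ) : treePath m j ≠ [] := by
  have hL : 0 < Nat.log 2 m := Nat.log_pos (by norm_num) hm
  unfold treePath
  split_ifs <;> intro hnil <;> have := congrArg List.length hnil <;>
    simp only [List.length_append, length_bitsPath, List.length_singleton,
      List.length_nil] at this <;> omega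

lemma mem_treeNodes {m : ℕ} {u : List Bool} :
    u ∈ treeNodes m ↔ ∃ j < m, u <+: treePath m j := by
  simp [treeNodes, List.mem_inits]

lemma mem_leafNodes {m : ℕ} {u : List Bool} :
    u ∈ leafNodes m ↔ ∃ j < m, treePath m j = u := by
  simp [leafNodes]

lemma leafNodes_subset {m : ℕ} : leafNodes m ⊆ treeNodes m := by
  intro u hu
  rw [mem_leafNodes] at hu
  obtain ⟨j, hj, rfl⟩ := hu
  exact mem_treeNodes.mpr ⟨j, hj, List.prefix_refl _⟩

lemma sum_two_pow (t : ℕ) : ∑ i ∈ Finset.range t, 2 ^ i = 2 ^ t - 1 := by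
  induction t with
  | zero => simp
  | succ t ih =>
    rw [Finset.sum_range_succ, ih]
    have h1 : 1 ≤ 2 ^ t := Nat.one_le_two_pow
    have h2 : (2 : ℕ) ^ (t + 1) = 2 * 2 ^ t := by ring
    omega

lemma card_treeNodes {m : ℕ} (hm : 2 ≤ m) : (treeNodes m).card ≤ 2 * m - 1 := by
  classical
  have h2L : 2 ^ Nat.log 2 m ≤ m := Nat.pow_log_le_self 2 (by omega)
  have hup : m < 2 * 2 ^ Nat.log 2 m := by
    have := Nat.lt_pow_succ_log_self (by norm_num : 1 < 2) m
    rw [pow_succ] at this; omega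
  set L : ℕ := Nat.log 2 m with hL
  have hL' : Nat.log 2 m = L := rfl
  set S1 : Finset (List Bool) := (Finset.range (L + 1)).biUnion
    (fun len => (Finset.univ : Finset (Fin len → Bool)).image (fun f => List.ofFn f)) with hS1
  set S2 : Finset (List Bool) := ((Finset.range (m - 2 ^ L)) ×ˢ (Finset.univ : Finset Bool)).image
    (fun p => bitsPath L p.1 ++ [p.2]) with hS2
  have hsub : treeNodes m ⊆ S1 ∪ S2 := by
    intro u hu
    rw [mem_treeNodes] at hu
    obtain ⟨j, hj, hpre⟩ := hu
    by_cases hlen : u.length ≤ L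
    · apply Finset.mem_union_left
      rw [hS1]
      apply Finset.mem_biUnion.mpr
      exact ⟨u.length, Finset.mem_range.mpr (by rw [hL] at hlen; omega),
        Finset.mem_image.mpr ⟨u.get, Finset.mem_univ _, List.ofFn_get u⟩⟩
    · apply Finset.mem_union_right
      have hlp := hpre.length_le
      revert hpre hlp
      unfold treePath
      split_ifs with h1 h2
      · intro _ hlp; rw [length_bitsPath, hL'] at hlp; omega
      · intro hpre hlp
        rw [List.length_append, length_bitsPath, List.length_singleton, hL'] at hlp
        have hu2 : u = bitsPath L (j / 2) ++ [j % 2 == 1] := by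
          rw [← hL']
          exact hpre.eq_of_length
            (by rw [List.length_append, length_bitsPath, List.length_singleton, hL']; omega)
        rw [hS2, hu2]
        exact Finset.mem_image.mpr ⟨(j / 2, j % 2 == 1),
          Finset.mem_product.mpr ⟨Finset.mem_range.mpr (by rw [hL]; omega), Finset.mem_univ _⟩,
            rfl⟩
      · intro _ hlp; rw [length_bitsPath, hL'] at hlp; omega
  have hc1 : S1.card ≤ 2 ^ (L + 1) - 1 := by
    calc S1.card ≤ ∑ len ∈ Finset.range (L + 1),
        ((Finset.univ : Finset (Fin len → Bool)).image (fun f => List.ofFn f)).card :=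
          Finset.card_biUnion_le
      _ ≤ ∑ len ∈ Finset.range (L + 1), 2 ^ len := Finset.sum_le_sum (fun len _ =>
          le_trans Finset.card_image_le (by simp))
      _ = 2 ^ (L + 1) - 1 := sum_two_pow _
  have hc2 : S2.card ≤ (m - 2 ^ L) * 2 := le_trans Finset.card_image_le (by simp)
  calc (treeNodes m).card ≤ (S1 ∪ S2).card := Finset.card_le_card hsub
    _ ≤ S1.card + S2.card := Finset.card_union_le _ _
    _ ≤ 2 ^ (L + 1) - 1 + (m - 2 ^ L) * 2 := Nat.add_le_add hc1 hc2
    _ ≤ 2 * m - 1 := by rw [pow_succ]; omega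

lemma card_leafNodes {m : ℕ} (hm : 2 ≤ m) : (leafNodes m).card = m := by
  rw [leafNodes, Finset.card_image_of_injOn, Finset.card_range]
  intro j hj j' hj' hjj
  simp only [Finset.coe_range, Set.mem_Iio] at hj hj'
  have hjj' : treePath m j = treePath m j' := hjj
  refine treePath_prefix_free hm hj hj' ?_
  rw [hjj']

lemma card_internalNodes {m : ℕ} (hm : 2 ≤ m) : (internalNodes m).card ≤ m - 1 := by
  rw [internalNodes, Finset.card_sdiff_of_subset leafNodes_subset, card_leafNodes hm]
  have := card_treeNodes hm
  omega

lemma treePath_not_internal {m : ℕ} {j : ℕ} (hj : j < m) :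
    treePath m j ∉ internalNodes m := by
  rw [internalNodes, Finset.mem_sdiff]
  rintro ⟨-, hleaf⟩
  exact hleaf (mem_leafNodes.mpr ⟨j, hj, rfl⟩)

/-! The modified 1-input built from the queried set. -/

noncomputable def bfun (m k : ℕ) (B : Finset (Fin m)) (hB : B.card = k) : Fin k → Fin m :=
  fun s => (B.orderIsoOfFin hB s : Fin m)

noncomputable def afun (n m k : ℕ) (ℓ : Fin m → Fin n) (B : Finset (Fin m)) (hB : B.card = k) :
    Fin k → Fin n × Fin m :=
  fun s => (ℓ (bfun m k B hB s), bfun m k B hB s)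

noncomputable def nodeCell (n m : ℕ) (ℓ : Fin m → Fin n) (B : Finset (Fin m))
    (φ : List Bool → Fin n × Fin m) (w : List Bool) : Option (Fin n × Fin m) :=
  if w ∈ (internalNodes m).erase [] then some (φ w)
  else if h : ∃ j : Fin m, j ∉ B ∧ treePath m j.1 = w then some (ℓ h.choose, h.choose)
  else none

noncomputable def yinput (n m k : ℕ) (ℓ : Fin m → Fin n) (B : Finset (Fin m)) (hB : B.card = k)
    (φ : List Bool → Fin n × Fin m) : Fin n × Fin m → PSym n m (Fin n × Fin m) := fun c =>
  if hc : c.2 ∈ B ∧ c.1 = ℓ c.2 then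
    { val := true
      lp := nodeCell n m ℓ B φ [false]
      rp := nodeCell n m ℓ B φ [true]
      bp := some (afun n m k ℓ B hB
        ⟨(((B.orderIsoOfFin hB).symm ⟨c.2, hc.1⟩).1 + 1) % k,
          Nat.mod_lt _ ((B.orderIsoOfFin hB).symm ⟨c.2, hc.1⟩).pos⟩) }
  else if h2 : ∃ u ∈ (internalNodes m).erase ([] : List Bool), φ u = c then
    { val := true
      lp := nodeCell n m ℓ B φ (h2.choose ++ [false])
      rp := nodeCell n m ℓ B φ (h2.choose ++ [true])
      bp := none }
  else xhard n m (Fin n × Fin m) ℓ c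

variable {n m k : ℕ} {ℓ : Fin m → Fin n} {B : Finset (Fin m)} {hB : B.card = k}
  {φ : List Bool → Fin n × Fin m}

lemma bfun_mem (s : Fin k) : bfun m k B hB s ∈ B := (B.orderIsoOfFin hB s).2

lemma bfun_surj {j : Fin m} (hj : j ∈ B) : ∃ s, bfun m k B hB s = j :=
  ⟨(B.orderIsoOfFin hB).symm ⟨j, hj⟩, by simp [bfun]⟩

lemma bfun_inj : Function.Injective (bfun m k B hB) := fun s t h =>
  (B.orderIsoOfFin hB).injective (Subtype.ext h)

lemma yinput_a (s : Fin k) :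
    yinput n m k ℓ B hB φ (afun n m k ℓ B hB s) =
      { val := true, lp := nodeCell n m ℓ B φ [false], rp := nodeCell n m ℓ B φ [true],
        bp := some (afun n m k ℓ B hB ⟨(s.1 + 1) % k, Nat.mod_lt _ s.pos⟩) } := by
  have hc : (afun n m k ℓ B hB s).2 ∈ B ∧ (afun n m k ℓ B hB s).1 = ℓ (afun n m k ℓ B hB s).2 :=
    ⟨bfun_mem (hB := hB) s, rfl⟩
  simp only [yinput]
  rw [dif_pos hc]
  have hs : (B.orderIsoOfFin hB).symm ⟨(afun n m k ℓ B hB s).2, hc.1⟩ = s := by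
    have h1 : (⟨(afun n m k ℓ B hB s).2, hc.1⟩ : {j // j ∈ B}) = B.orderIsoOfFin hB s :=
      Subtype.ext rfl
    rw [h1, OrderIso.symm_apply_apply]
  simp only [PSym.mk.injEq, Option.some.injEq, true_and]
  congr 1
  refine Fin.ext ?_
  show (((B.orderIsoOfFin hB).symm ⟨(afun n m k ℓ B hB s).2, hc.1⟩).1 + 1) % k = (s.1 + 1) % k
  rw [hs]

lemma yinput_phi
    (hφinj : Set.InjOn φ ((internalNodes m).erase ([] : List Bool) : Finset (List Bool)))
    (hφB : ∀ u ∈ (internalNodes m).erase ([] : List Bool), (φ u).2 ∉ B)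
    {w : List Bool} (hw : w ∈ (internalNodes m).erase ([] : List Bool)) :
    yinput n m k ℓ B hB φ (φ w) =
      { val := true, lp := nodeCell n m ℓ B φ (w ++ [false]),
        rp := nodeCell n m ℓ B φ (w ++ [true]), bp := none } := by
  have hc : ¬((φ w).2 ∈ B ∧ (φ w).1 = ℓ (φ w).2) := fun h => hφB w hw h.1
  have h2 : ∃ u ∈ (internalNodes m).erase ([] : List Bool), φ u = φ w := ⟨w, hw, rfl⟩
  simp only [yinput]
  rw [dif_neg hc, dif_pos h2]
  have hch : h2.choose = w := hφinj (Finset.mem_coe.mpr h2.choose_spec.1)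
    (Finset.mem_coe.mpr hw) h2.choose_spec.2
  rw [hch]

lemma yinput_other {c : Fin n × Fin m} (hc1 : ¬(c.2 ∈ B ∧ c.1 = ℓ c.2))
    (hc2 : ∀ u ∈ (internalNodes m).erase ([] : List Bool), φ u ≠ c) :
    yinput n m k ℓ B hB φ c = xhard n m (Fin n × Fin m) ℓ c := by
  simp only [yinput]
  rw [dif_neg hc1, dif_neg]
  rintro ⟨u, hu, he⟩
  exact hc2 u hu he

lemma nodeCell_internal {w : List Bool} (hw : w ∈ (internalNodes m).erase ([] : List Bool)) :
    nodeCell n m ℓ B φ w = some (φ w) := by rw [nodeCell, if_pos hw]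

lemma nodeCell_leaf (hm : 2 ≤ m) {j : Fin m} (hj : j ∉ B) :
    nodeCell n m ℓ B φ (treePath m j.1) = some (ℓ j, j) := by
  have hnotint : treePath m j.1 ∉ (internalNodes m).erase ([] : List Bool) := fun h =>
    treePath_not_internal j.isLt (Finset.mem_of_mem_erase h)
  have hex : ∃ j' : Fin m, j' ∉ B ∧ treePath m j'.1 = treePath m j.1 := ⟨j, hj, rfl⟩
  rw [nodeCell, if_neg hnotint, dif_pos hex]
  have hch : hex.choose = j := by
    have hsp := hex.choose_spec
    refine Fin.ext (treePath_prefix_free hm hex.choose.isLt j.isLt ?_)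
    rw [hsp.2]
  rw [hch]

lemma yinput_val (hφz : ∀ u ∈ (internalNodes m).erase ([] : List Bool), (φ u).1 ≠ ℓ (φ u).2)
    (c : Fin n × Fin m) :
    ((yinput n m k ℓ B hB φ c).val = false) ↔ (c.1 = ℓ c.2 ∧ c.2 ∉ B) := by
  simp only [yinput]
  split_ifs with h1 h2
  · refine iff_of_false (by simp) ?_
    rintro ⟨-, hnB⟩; exact hnB h1.1
  · obtain ⟨u, hu, he⟩ := h2
    refine iff_of_false (by simp) ?_
    rintro ⟨hcl, -⟩
    exact hφz u hu (by rw [he]; exact hcl)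
  · unfold xhard
    split_ifs with h3
    · exact iff_of_true rfl ⟨h3, fun hB2 => h1 ⟨hB2, h3⟩⟩
    · exact iff_of_false (by simp [PSym.one]) (fun h => h3 h.1)

lemma follow (n m k : ℕ) (hm : 2 ≤ m) (ℓ : Fin m → Fin n) (B : Finset (Fin m)) (hB : B.card = k)
    (φ : List Bool → Fin n × Fin m)
    (hφinj : Set.InjOn φ ((internalNodes m).erase ([] : List Bool) : Finset (List Bool)))
    (hφB : ∀ u ∈ (internalNodes m).erase ([] : List Bool), (φ u).2 ∉ B) :
    ∀ (p u : List Bool) (c : Fin n × Fin m) (j : Fin m), j ∉ B →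
      u ++ p = treePath m j.1 → p ≠ [] →
      (yinput n m k ℓ B hB φ c).lp = nodeCell n m ℓ B φ (u ++ [false]) →
      (yinput n m k ℓ B hB φ c).rp = nodeCell n m ℓ B φ (u ++ [true]) →
      followPath (yinput n m k ℓ B hB φ) c p = some (ℓ j, j) := by
  intro p
  induction p with
  | nil => intro u c j _ _ hne; exact absurd rfl hne
  | cons bb p' ih =>
    intro u c j hjB hupath _ hlp hrp
    by_cases hp' : p' = []
    · subst hp'
      have hleaf : u ++ [bb] = treePath m j.1 := hupath
      simp only [followPath, List.foldl_cons, List.foldl_nil, Option.bind_some]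
      cases bb
      · rw [hlp, hleaf, nodeCell_leaf hm hjB]; simp
      · rw [hrp, hleaf, nodeCell_leaf hm hjB]; simp
    · set w : List Bool := u ++ [bb] with hw
      have hwpath : w ++ p' = treePath m j.1 := by rw [hw, ← hupath]; simp
      have hwtree : w ∈ treeNodes m := mem_treeNodes.mpr ⟨j.1, j.isLt, ⟨p', hwpath⟩⟩
      have hwleaf : w ∉ leafNodes m := by
        rw [mem_leafNodes]
        rintro ⟨j'', hj'', heq⟩
        have hjj : j'' = j.1 := treePath_prefix_free hm hj'' j.isLt (by rw [heq]; exact ⟨p', hwpath⟩)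
        rw [hjj] at heq
        apply hp'
        have hlen := congrArg List.length hwpath
        rw [← heq] at hlen
        simp only [List.length_append] at hlen
        have hl0 : p'.length = 0 := by omega
        exact List.length_eq_zero_iff.mp hl0
      have hwerase : w ∈ (internalNodes m).erase ([] : List Bool) :=
        Finset.mem_erase.mpr ⟨by simp [hw], Finset.mem_sdiff.mpr ⟨hwtree, hwleaf⟩⟩
      have hy := yinput_phi (ℓ := ℓ) (hB := hB) hφinj hφB hwerase
      have hstep : followPath (yinput n m k ℓ B hB φ) c (bb :: p')
          = followPath (yinput n m k ℓ B hB φ) (φ w) p' := by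
        simp only [followPath, List.foldl_cons, Option.bind_some]
        congr 1
        cases bb
        · rw [hlp]; exact nodeCell_internal hwerase
        · rw [hrp]; exact nodeCell_internal hwerase
      rw [hstep]
      refine ih w (φ w) j hjB hwpath hp' ?_ ?_ <;> rw [hy]

lemma card_C (n m k : ℕ) (hn : 1 ≤ n) (ℓ : Fin m → Fin n) (B : Finset (Fin m))
    (hB : B.card = k) :
    ((Finset.univ : Finset (Fin n × Fin m)).filter
      (fun c => c.2 ∉ B ∧ c.1 ≠ ℓ c.2)).card = (m - k) * (n - 1) := by
  classical
  have hrw : (Finset.univ : Finset (Fin n × Fin m)).filter (fun c => c.2 ∉ B ∧ c.1 ≠ ℓ c.2)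
      = Bᶜ.biUnion (fun j => (Finset.univ.erase (ℓ j)).image (fun i => (i, j))) := by
    ext c
    simp only [Finset.mem_filter, Finset.mem_univ, true_and, Finset.mem_biUnion,
      Finset.mem_compl, Finset.mem_image, Finset.mem_erase, and_true]
    constructor
    · rintro ⟨h1, h2⟩
      exact ⟨c.2, h1, c.1, h2, Prod.mk.eta⟩
    · rintro ⟨j, hj, i, hi, rfl⟩
      exact ⟨hj, hi⟩
  rw [hrw, Finset.card_biUnion]
  · have hcard : ∀ j : Fin m, ((Finset.univ.erase (ℓ j)).image
        (fun i => ((i, j) : Fin n × Fin m))).card = n - 1 := by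
      intro j
      rw [Finset.card_image_of_injective _ (fun a b h => by simpa using congrArg Prod.fst h),
        Finset.card_erase_of_mem (Finset.mem_univ _), Finset.card_univ, Fintype.card_fin]
    rw [Finset.sum_congr rfl fun j _ => hcard j, Finset.sum_const, Finset.card_compl,
      Fintype.card_fin, hB, smul_eq_mul]
  · intro j1 _ j2 _ hne
    show Disjoint _ _
    rw [Finset.disjoint_left]
    rintro c hc1 hc2
    simp only [Finset.mem_image] at hc1 hc2
    obtain ⟨i1, -, rfl⟩ := hc1
    obtain ⟨i2, -, heq⟩ := hc2
    have hjj : j2 = j1 := by simpa using congrArg Prod.snd heq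
    exact hne hjj.symm

end S13

/-- Any deterministic decision tree computing `h_{k,n,m}`, on any input
`x^ℓ` of the hard distribution, either queries at least `m - k + 1` cells with value 0, or
queries more than `n(m-k) - 2m` cells in total. -/
theorem statement13 (n m k : ℕ) (hn : 2 ≤ n) (hm : 2 ≤ m) (hk1 : 1 ≤ k) (hk2 : k < m)
    (T : DTree (Fin n × Fin m) (PSym n m (Fin n × Fin m)))
    (hT : T.Computes (hFun k n m)) (ℓ : Fin m → Fin n) :
    m - k + 1 ≤ ((T.queryList (xhard n m (Fin n × Fin m) ℓ)).toFinset.filter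
        fun c => (xhard n m (Fin n × Fin m) ℓ c).val = false).card ∨
      (n : ℤ) * ((m : ℤ) - k) - 2 * m <
        ((T.queryList (xhard n m (Fin n × Fin m) ℓ)).toFinset.card : ℤ) := by
  classical
  by_contra hcon
  push_neg at hcon
  obtain ⟨hcon1, hcon2⟩ := hcon
  set x : Fin n × Fin m → PSym n m (Fin n × Fin m) := xhard n m (Fin n × Fin m) ℓ with hx
  set Q : Finset (Fin n × Fin m) := (T.queryList x).toFinset with hQdef
  -- Step 1: choose the marked columns B (columns with unqueried zero cell)
  have hFcard : (Q.filter fun c => (x c).val = false).card ≤ m - k := by omega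
  set ZQ : Finset (Fin m) := Finset.univ.filter (fun j => (ℓ j, j) ∈ Q) with hZQdef
  have hZQ : ZQ.card ≤ m - k := by
    refine le_trans (Finset.card_le_card_of_injOn (fun j => (ℓ j, j)) ?_ ?_) hFcard
    · intro j hj
      simp only [hZQdef, Finset.mem_coe, Finset.mem_filter, Finset.mem_univ, true_and] at hj
      rw [Finset.mem_coe, Finset.mem_filter]
      exact ⟨hj, by simp [hx, xhard, PSym.zero]⟩
    · intro j _ j' _ h
      simpa using congrArg Prod.snd h
  have hcompl : k ≤ ZQᶜ.card := by
    rw [Finset.card_compl, Fintype.card_fin]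
    omega
  obtain ⟨B, hBsub, hBcard⟩ := Finset.exists_subset_card_eq hcompl
  have hBz : ∀ j ∈ B, (ℓ j, j) ∉ Q := by
    intro j hj
    have h1 := hBsub hj
    simp only [Finset.mem_compl, hZQdef, Finset.mem_filter, Finset.mem_univ, true_and] at h1
    exact h1
  -- Step 2: available cells for internal tree nodes
  set C : Finset (Fin n × Fin m) :=
    Finset.univ.filter (fun c => c.2 ∉ B ∧ c.1 ≠ ℓ c.2) with hCdef
  have hCcard : C.card = (m - k) * (n - 1) := S13.card_C n m k (by omega) ℓ B hBcard
  set Avail : Finset (Fin n × Fin m) := C \ Q with hAvaildef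
  have hAvailcard : (m : ℤ) - 1 ≤ (Avail.card : ℤ) := by
    have h1 : C.card ≤ Avail.card + Q.card := by
      rw [hAvaildef]; exact Finset.card_le_card_sdiff_add_card
    have h2 : (C.card : ℤ) = ((m : ℤ) - k) * ((n : ℤ) - 1) := by
      rw [hCcard, Nat.cast_mul, Nat.cast_sub (by omega : k ≤ m), Nat.cast_sub (by omega : 1 ≤ n)]
      push_cast
      ring
    have h3 : (C.card : ℤ) ≤ (Avail.card : ℤ) + (Q.card : ℤ) := by exact_mod_cast h1
    have hk' : (1 : ℤ) ≤ (k : ℤ) := by exact_mod_cast hk1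
    nlinarith [h2, h3, hcon2, hk']
  have hErase : ((internalNodes m).erase ([] : List Bool)).card ≤ Avail.card := by
    have h1 : ((internalNodes m).erase ([] : List Bool)).card ≤ m - 1 :=
      le_trans Finset.card_erase_le (S13.card_internalNodes hm)
    omega
  -- Step 3: the injection φ placing the internal nodes
  have hcard2 : Fintype.card {u // u ∈ (internalNodes m).erase ([] : List Bool)} ≤
      Fintype.card {c // c ∈ Avail} := by
    simpa [Fintype.card_coe] using hErase
  obtain ⟨emb⟩ := Function.Embedding.nonempty_of_card_le hcard2
  set φ : List Bool → Fin n × Fin m := fun u =>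
    if h : u ∈ (internalNodes m).erase ([] : List Bool) then (emb ⟨u, h⟩).1
    else (⟨0, by omega⟩, ⟨0, by omega⟩) with hφdef
  have hφA : ∀ u ∈ (internalNodes m).erase ([] : List Bool), φ u ∈ Avail := by
    intro u hu
    have h1 : φ u = (emb ⟨u, hu⟩).1 := by simp only [hφdef, dif_pos hu]
    rw [h1]
    exact (emb ⟨u, hu⟩).2
  have hφinj : Set.InjOn φ
      (((internalNodes m).erase ([] : List Bool) : Finset (List Bool)) : Set (List Bool)) := by
    intro u hu v hv h
    rw [Finset.mem_coe] at hu hv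
    simp only [hφdef, dif_pos hu, dif_pos hv] at h
    have h2 := emb.injective (Subtype.ext h)
    simpa using congrArg Subtype.val h2
  have hφB : ∀ u ∈ (internalNodes m).erase ([] : List Bool), (φ u).2 ∉ B := by
    intro u hu
    have h1 := hφA u hu
    rw [hAvaildef, Finset.mem_sdiff, hCdef, Finset.mem_filter] at h1
    exact h1.1.2.1
  have hφz : ∀ u ∈ (internalNodes m).erase ([] : List Bool), (φ u).1 ≠ ℓ (φ u).2 := by
    intro u hu
    have h1 := hφA u hu
    rw [hAvaildef, Finset.mem_sdiff, hCdef, Finset.mem_filter] at h1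
    exact h1.1.2.2
  have hφQ : ∀ u ∈ (internalNodes m).erase ([] : List Bool), φ u ∉ Q := by
    intro u hu
    have h1 := hφA u hu
    rw [hAvaildef, Finset.mem_sdiff] at h1
    exact h1.2
  -- Step 4: the modified input y agrees with x on all queried cells
  have hagree : ∀ v ∈ T.queryList x, S13.yinput n m k ℓ B hBcard φ v = x v := by
    intro v hv
    have hvQ : v ∈ Q := by rw [hQdef]; exact List.mem_toFinset.mpr hv
    rw [hx]
    refine S13.yinput_other ?_ ?_
    · rintro ⟨h1, h2⟩
      have h3 : v = (ℓ v.2, v.2) := Prod.ext h2 rfl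
      exact hBz v.2 h1 (by rw [← h3]; exact hvQ)
    · intro u hu he
      exact hφQ u hu (he ▸ hvQ)
  have heval : T.eval (S13.yinput n m k ℓ B hBcard φ) = T.eval x :=
    S13.eval_agree x (S13.yinput n m k ℓ B hBcard φ) T hagree
  -- Step 5: x is a 0-input
  have hx0 : hFun k n m x = false := by
    rw [hFun, if_neg]
    rintro ⟨b', a', hc⟩
    have h2 := (hc.2.1 (b' ⟨0, by omega⟩)).mpr ⟨⟨0, by omega⟩, rfl⟩
    have h3 := h2 (ℓ (b' ⟨0, by omega⟩))
    simp only [hx, xhard, if_pos rfl] at h3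
    simp [PSym.zero] at h3
  -- Step 6: y is a 1-input
  have hy1 : hFun k n m (S13.yinput n m k ℓ B hBcard φ) = true := by
    rw [hFun, if_pos]
    refine ⟨S13.bfun m k B hBcard, S13.afun n m k ℓ B hBcard, ?_, ?_, fun s => rfl, ?_, ?_, ?_, ?_⟩
    · exact S13.bfun_inj (hB := hBcard)
    · -- marked columns are exactly the all-1 columns
      intro j
      constructor
      · intro hall
        by_contra hns
        have hjB : j ∉ B := fun hj => hns (S13.bfun_surj (hB := hBcard) hj)
        have hv := hall (ℓ j)
        have hf : (S13.yinput n m k ℓ B hBcard φ (ℓ j, j)).val = false :=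
          (S13.yinput_val hφz (ℓ j, j)).mpr ⟨rfl, hjB⟩
        rw [hv] at hf
        exact Bool.noConfusion hf
      · rintro ⟨s, rfl⟩
        intro i
        by_cases hval : (S13.yinput n m k ℓ B hBcard φ (i, S13.bfun m k B hBcard s)).val = false
        · have h2 := (S13.yinput_val hφz _).mp hval
          exact ((h2.2 (S13.bfun_mem (hB := hBcard) s))).elim
        · cases hb : (S13.yinput n m k ℓ B hBcard φ (i, S13.bfun m k B hBcard s)).val
          · exact absurd hb hval
          · rfl
    · -- the special element is the unique non-(1,⊥,⊥,⊥) cell of its column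
      intro s i
      by_cases hi : i = ℓ (S13.bfun m k B hBcard s)
      · subst hi
        constructor
        · intro _; rfl
        · intro _
          show S13.yinput n m k ℓ B hBcard φ (S13.afun n m k ℓ B hBcard s) ≠
            PSym.one n m (Fin n × Fin m)
          rw [S13.yinput_a]
          simp [PSym.one]
      · have h215 : S13.yinput n m k ℓ B hBcard φ (i, S13.bfun m k B hBcard s)
            = xhard n m (Fin n × Fin m) ℓ (i, S13.bfun m k B hBcard s) :=
          S13.yinput_other (fun h => hi h.2)
            (fun u hu he => (hφB u hu (by rw [he]; exact S13.bfun_mem (hB := hBcard) s)).elim)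
        constructor
        · intro hne
          exfalso
          apply hne
          rw [h215]
          simp [xhard, hi]
        · intro heq
          exact (hi (by simpa [S13.afun] using congrArg Prod.fst heq)).elim
    · -- the internal pointers form a cycle
      intro s
      show (S13.yinput n m k ℓ B hBcard φ (S13.afun n m k ℓ B hBcard s)).bp = _
      rw [S13.yinput_a]
    · -- equal left and right pointers
      intro s t
      constructor <;> rw [S13.yinput_a, S13.yinput_a]
    · -- the tree paths reach the required zeroes
      intro j hj s
      have hjB : j ∉ B := fun hjB => hj _ (S13.bfun_surj (hB := hBcard) hjB).choose_spec
      refine ⟨(ℓ j, j), ?_, rfl, ?_⟩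
      · refine S13.follow n m k hm ℓ B hBcard φ hφinj hφB (treePath m j.1) []
          (S13.afun n m k ℓ B hBcard s) j hjB (by simp) (S13.treePath_ne_nil hm j.1) ?_ ?_
        · rw [S13.yinput_a]; rfl
        · rw [S13.yinput_a]; rfl
      · exact (S13.yinput_val hφz (ℓ j, j)).mpr ⟨rfl, hjB⟩
  -- Step 7: contradiction
  have h1 := hT x
  have h2 := hT (S13.yinput n m k ℓ B hBcard φ)
  rw [hx0] at h1
  rw [hy1] at h2
  rw [heval, h1] at h2
  exact Bool.noConfusion h2
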